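/- Suppose ν = 0 in the linearized radiative Euler–MHD system, and let B̄ = (B̄₁, B̄₂, B̄₃) ≠ 0. Then the Shizuta–Kawashima condition fails: there exists a unit vector ξ ∈ ℝ³ with ξ · B̄ = 0 and a nonzero vector x ∈ ℝ³ with x · ξ = 0 such that X = (0, x₁, x₂, x₃, 0, 0, 0, 0, 0) lies in ker ℬ(ξ) and is an eigenvector of (Ã₀)⁻¹𝒜(ξ) with eigenvalue 0. -/

import Mathlib

open Matrix

/-- Symmetrized coefficient matrices `Ã_j = Ã₀ A_j` of the linearized radiative
Euler–MHD system. -/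
noncomputable def skAt1 (μ α' β' β'' B1 B2 B3 : ℝ) : Matrix (Fin 9) (Fin 9) ℝ :=
  !![0, μ * α', 0, 0, 0, 0, 0, 0, 0;
     μ * α', 0, 0, 0, μ * β', μ * β'', 0, B2, B3;
     0, 0, 0, 0, 0, 0, 0, -B1, 0;
     0, 0, 0, 0, 0, 0, 0, 0, -B1;
     0, μ * β', 0, 0, 0, 0, 0, 0, 0;
     0, μ * β'', 0, 0, 0, 0, 0, 0, 0;
     0, 0, 0, 0, 0, 0, 0, 0, 0;
     0, B2, -B1, 0, 0, 0, 0, 0, 0;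
     0, B3, 0, -B1, 0, 0, 0, 0, 0]

noncomputable def skAt2 (μ α' β' β'' B1 B2 B3 : ℝ) : Matrix (Fin 9) (Fin 9) ℝ :=
  !![0, 0, μ * α', 0, 0, 0, 0, 0, 0;
     0, 0, 0, 0, 0, 0, -B2, 0, 0;
     μ * α', 0, 0, 0, μ * β', μ * β'', B1, 0, B3;
     0, 0, 0, 0, 0, 0, 0, 0, -B2;
     0, 0, μ * β', 0, 0, 0, 0, 0, 0;
     0, 0, μ * β'', 0, 0, 0, 0, 0, 0;
     0, -B2, B1, 0, 0, 0, 0, 0, 0;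
     0, 0, 0, 0, 0, 0, 0, 0, 0;
     0, 0, B3, -B2, 0, 0, 0, 0, 0]

noncomputable def skAt3 (μ α' β' β'' B1 B2 B3 : ℝ) : Matrix (Fin 9) (Fin 9) ℝ :=
  !![0, 0, 0, μ * α', 0, 0, 0, 0, 0;
     0, 0, 0, 0, 0, 0, -B3, 0, 0;
     0, 0, 0, 0, 0, 0, 0, -B3, 0;
     μ * α', 0, 0, 0, μ * β', μ * β'', B1, B2, 0;
     0, 0, 0, μ * β', 0, 0, 0, 0, 0;
     0, 0, 0, μ * β'', 0, 0, 0, 0, 0;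
     0, -B3, 0, B1, 0, 0, 0, 0, 0;
     0, 0, -B3, B2, 0, 0, 0, 0, 0;
     0, 0, 0, 0, 0, 0, 0, 0, 0]

/-- The symbol `𝒜(ξ) = ξ₁Ã₁ + ξ₂Ã₂ + ξ₃Ã₃`. -/
noncomputable def skA (μ α' β' β'' B1 B2 B3 : ℝ) (ξ : Fin 3 → ℝ) :
    Matrix (Fin 9) (Fin 9) ℝ :=
  ξ 0 • skAt1 μ α' β' β'' B1 B2 B3 + ξ 1 • skAt2 μ α' β' β'' B1 B2 B3
    + ξ 2 • skAt3 μ α' β' β'' B1 B2 B3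

/-- The diagonal symmetrizer `Ã₀`. -/
noncomputable def skA0 (μ ρ α' β' β'' γ' γ'' : ℝ) : Matrix (Fin 9) (Fin 9) ℝ :=
  Matrix.diagonal ![μ * α' / ρ, μ, μ, μ, μ * β' / γ', μ * β'' / γ'', 1, 1, 1]

/-- The dissipation matrix `ℬ(ξ) = B̃ + |ξ|² D̃`. -/
noncomputable def skB (μ β' β'' γ' γ'' δ' δ'' ζ η pib σa ν lam : ℝ) (ξ : Fin 3 → ℝ) :
    Matrix (Fin 9) (Fin 9) ℝ :=
  let s := ξ 0 ^ 2 + ξ 1 ^ 2 + ξ 2 ^ 2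
  !![0, 0, 0, 0, 0, 0, 0, 0, 0;
     0, μ * ν, 0, 0, 0, 0, 0, 0, 0;
     0, 0, μ * ν, 0, 0, 0, 0, 0, 0;
     0, 0, 0, μ * ν, 0, 0, 0, 0, 0;
     0, 0, 0, 0, μ * β' * (ζ + δ' * s) / γ', -(μ * β' * η / γ'), 0, 0, 0;
     0, 0, 0, 0, -(μ * β'' * pib / γ''), μ * β'' * (σa + δ'' * s) / γ'', 0, 0, 0;
     0, 0, 0, 0, 0, 0, lam * s, 0, 0;
     0, 0, 0, 0, 0, 0, 0, lam * s, 0;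
     0, 0, 0, 0, 0, 0, 0, 0, lam * s]

/-- Failure of the Shizuta–Kawashima condition without damping (`ν = 0`):
there is a unit frequency `ξ ⊥ B̄` and a nonzero `x ⊥ ξ` such that
`X = (0, x, 0, 0, 0, 0, 0)` lies in `ker ℬ(ξ)` and is an eigenvector of
`(Ã₀)⁻¹ 𝒜(ξ)` with eigenvalue `0`. -/

@[simp] lemma vec9_val_five {α : Type*} (a b c d e : α) (u : Fin 4 → α) :
    (vecCons a (vecCons b (vecCons c (vecCons d (vecCons e u)))) : Fin 9 → α) 5
      = vecHead u := rfl
@[simp] lemma vec9_val_six {α : Type*} (a b c d e f : α) (u : Fin 3 → α) :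
    (vecCons a (vecCons b (vecCons c (vecCons d (vecCons e (vecCons f u))))) : Fin 9 → α) 6
      = vecHead u := rfl
@[simp] lemma vec9_val_seven {α : Type*} (a b c d e f g : α) (u : Fin 2 → α) :
    (vecCons a (vecCons b (vecCons c (vecCons d (vecCons e (vecCons f (vecCons g u)))))) : Fin 9 → α) 7
      = vecHead u := rfl
@[simp] lemma vec9_val_eight {α : Type*} (a b c d e f g h : α) (u : Fin 1 → α) :
    (vecCons a (vecCons b (vecCons c (vecCons d (vecCons e (vecCons f (vecCons g (vecCons h u))))))) : Fin 9 → α) 8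
      = vecHead u := rfl

lemma skA_mulVec_B (μ α' β' β'' B1 B2 B3 : ℝ) (ξ : Fin 3 → ℝ)
    (h1 : ξ 0 * B1 + ξ 1 * B2 + ξ 2 * B3 = 0) :
    skA μ α' β' β'' B1 B2 B3 ξ *ᵥ (![0, B1, B2, B3, 0, 0, 0, 0, 0] : Fin 9 → ℝ) = 0 := by
  funext i
  fin_cases i <;>
    simp [skA, skAt1, skAt2, skAt3, Matrix.mulVec, dotProduct,
      Fin.sum_univ_succ] <;>
    first
      | linear_combination (μ * α') * h1
      | linear_combination (μ * β') * h1
      | linear_combination (μ * β'') * h1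
      | ring

lemma skB_mulVec_B (μ β' β'' γ' γ'' δ' δ'' ζ η pib σa lam B1 B2 B3 : ℝ)
    (ξ : Fin 3 → ℝ) :
    skB μ β' β'' γ' γ'' δ' δ'' ζ η pib σa 0 lam ξ *ᵥ
      (![0, B1, B2, B3, 0, 0, 0, 0, 0] : Fin 9 → ℝ) = 0 := by
  funext i
  fin_cases i <;>
    simp [skB, Matrix.mulVec, dotProduct, Fin.sum_univ_succ]

set_option maxHeartbeats 1000000

theorem stmt_8 (μ ρbar α' β' β'' γ' γ'' δ' δ'' ζ η pib σa lam B1 B2 B3 : ℝ)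
    (hμ : 0 < μ) (hρ : 0 < ρbar) (hα' : 0 < α') (hβ' : 0 < β') (hβ'' : 0 < β'')
    (hγ' : 0 < γ') (hγ'' : 0 < γ'') (hδ' : 0 < δ') (hδ'' : 0 < δ'')
    (hζ : 0 < ζ) (hη : 0 < η) (hpib : 0 < pib) (hσa : 0 < σa)
    (hlam : 0 < lam) (hcomp : ζ * σa = η * pib)
    (hB : (![B1, B2, B3] : Fin 3 → ℝ) ≠ 0) :
    ∃ ξ : Fin 3 → ℝ, ξ 0 ^ 2 + ξ 1 ^ 2 + ξ 2 ^ 2 = 1 ∧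
      ξ ⬝ᵥ ![B1, B2, B3] = 0 ∧
      ∃ x : Fin 3 → ℝ, x ≠ 0 ∧ x ⬝ᵥ ξ = 0 ∧
        skB μ β' β'' γ' γ'' δ' δ'' ζ η pib σa 0 lam ξ *ᵥ
            (![0, x 0, x 1, x 2, 0, 0, 0, 0, 0] : Fin 9 → ℝ) = 0 ∧
        ((skA0 μ ρbar α' β' β'' γ' γ'')⁻¹ * skA μ α' β' β'' B1 B2 B3 ξ) *ᵥ
            (![0, x 0, x 1, x 2, 0, 0, 0, 0, 0] : Fin 9 → ℝ)
          = (0 : ℝ) • (![0, x 0, x 1, x 2, 0, 0, 0, 0, 0] : Fin 9 → ℝ) := by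

  have hBsq : B1 ^ 2 + B2 ^ 2 + B3 ^ 2 ≠ 0 := by
    intro h
    apply hB
    have h1 : B1 = 0 := by nlinarith [sq_nonneg B1, sq_nonneg B2, sq_nonneg B3]
    have h2 : B2 = 0 := by nlinarith [sq_nonneg B1, sq_nonneg B2, sq_nonneg B3]
    have h3 : B3 = 0 := by nlinarith [sq_nonneg B1, sq_nonneg B2, sq_nonneg B3]
    funext i; fin_cases i <;> simp [h1, h2, h3]
  -- choose a unit vector ξ orthogonal to B
  obtain ⟨ξ, hunit, horth⟩ : ∃ ξ : Fin 3 → ℝ,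
      ξ 0 ^ 2 + ξ 1 ^ 2 + ξ 2 ^ 2 = 1 ∧ ξ 0 * B1 + ξ 1 * B2 + ξ 2 * B3 = 0 := by
    by_cases h12 : B1 ^ 2 + B2 ^ 2 = 0
    · have h1 : B1 = 0 := by nlinarith [sq_nonneg B1, sq_nonneg B2]
      have h2 : B2 = 0 := by nlinarith [sq_nonneg B1, sq_nonneg B2]
      exact ⟨![1, 0, 0], by norm_num; rfl, by simp [h1, h2]⟩
    · have hpos : 0 < B1 ^ 2 + B2 ^ 2 :=
        lt_of_le_of_ne (by positivity) (Ne.symm h12)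
      set n : ℝ := Real.sqrt (B1 ^ 2 + B2 ^ 2) with hn
      have hnpos : 0 < n := Real.sqrt_pos.mpr hpos
      have hn2 : n ^ 2 = B1 ^ 2 + B2 ^ 2 := Real.sq_sqrt hpos.le
      refine ⟨![-B2 / n, B1 / n, 0], ?_, ?_⟩
      · simp only [Matrix.cons_val_zero, Matrix.cons_val_one, Matrix.head_cons,
          Matrix.cons_val_two, Matrix.tail_cons]
        rw [show (-B2 / n) ^ 2 + (B1 / n) ^ 2 + (0 : ℝ) ^ 2
            = (B1 ^ 2 + B2 ^ 2) / n ^ 2 by ring, ← hn2]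
        field_simp
      · simp only [Matrix.cons_val_zero, Matrix.cons_val_one, Matrix.head_cons,
          Matrix.cons_val_two, Matrix.tail_cons]
        ring
  refine ⟨ξ, hunit, ?_, ![B1, B2, B3], hB, ?_, ?_, ?_⟩
  · simpa [dotProduct, Fin.sum_univ_three, mul_comm] using horth
  · simpa [dotProduct, Fin.sum_univ_three, mul_comm] using horth
  · simpa using skB_mulVec_B μ β' β'' γ' γ'' δ' δ'' ζ η pib σa lam B1 B2 B3 ξ
  · have hA := skA_mulVec_B μ α' β' β'' B1 B2 B3 ξ horth
    rw [← Matrix.mulVec_mulVec]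
    simp only [Matrix.cons_val_zero, Matrix.cons_val_one, Matrix.head_cons,
      Matrix.cons_val_two, Matrix.tail_cons] at hA ⊢
    rw [hA, Matrix.mulVec_zero, zero_smul]
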